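/- Let x₀, x, q ∈ ℝ^N, let r > 0 and η > 0 with η ≤ 0.1·r, let σ ∈ {−1, +1}, let u ∈ ℝ^N with ‖u‖ = 1, and let τ ∈ ℝ. Assume ‖x − x₀‖ < η, 0.9·r ≤ ‖q − x₀‖ ≤ 2·r, ⟨u, σ·(q − x₀)⟩ = τ·‖q − x₀‖, and 16·η/r ≤ τ ≤ 1. Then q ≠ x and τ/2 ≤ ⟨u, σ·(q − x)⟩/‖q − x‖ ≤ 3·τ/2. -/

import Mathlib

/-- if `‖x − x₀‖ < η ≤ 0.1·r`, `0.9·r ≤ ‖q − x₀‖ ≤ 2·r`, `σ = ±1`,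
`⟨u, σ·(q − x₀)⟩ = τ·‖q − x₀‖` with `16·η/r ≤ τ ≤ 1` and `‖u‖ = 1`, then `q ≠ x` and
`τ/2 ≤ ⟨u, σ·(q − x)⟩/‖q − x‖ ≤ 3·τ/2`. -/
theorem inner_direction_stable {N : ℕ} (hN : 0 < N)
    (x₀ x q : EuclideanSpace ℝ (Fin N)) (r η : ℝ)
    (hr : 0 < r) (hη : 0 < η) (hηr : η ≤ 0.1 * r)
    (σ : ℝ) (hσ : σ = 1 ∨ σ = -1)
    (u : EuclideanSpace ℝ (Fin N)) (hu : ‖u‖ = 1) (τ : ℝ)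
    (hx : ‖x - x₀‖ < η)
    (hq1 : 0.9 * r ≤ ‖q - x₀‖) (hq2 : ‖q - x₀‖ ≤ 2 * r)
    (hinner : (inner ℝ u (σ • (q - x₀)) : ℝ) = τ * ‖q - x₀‖)
    (hτ1 : 16 * η / r ≤ τ) (hτ2 : τ ≤ 1) :
    q ≠ x ∧ τ / 2 ≤ (inner ℝ u (σ • (q - x)) : ℝ) / ‖q - x‖ ∧
      (inner ℝ u (σ • (q - x)) : ℝ) / ‖q - x‖ ≤ 3 * τ / 2 := by
  have hτpos : 0 < τ := lt_of_lt_of_le (by positivity) hτ1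
  have hτr : 16 * η ≤ τ * r := by
    rw [div_le_iff₀ hr] at hτ1; linarith
  -- norm bounds
  have hdlow : ‖q - x₀‖ - ‖x - x₀‖ ≤ ‖q - x‖ := by
    have h := norm_sub_norm_le (q - x₀) (x - x₀)
    have he : (q - x₀) - (x - x₀) = q - x := by abel
    rwa [he] at h
  have hdhigh : ‖q - x‖ ≤ ‖q - x₀‖ + ‖x - x₀‖ := by
    have h := norm_sub_le_norm_sub_add_norm_sub q x₀ x
    linarith [h, (norm_sub_rev x₀ x).le]
  have hdpos : 0 < ‖q - x‖ := by nlinarith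
  -- inner product split
  have hsplit : (inner ℝ u (σ • (q - x)) : ℝ)
      = τ * ‖q - x₀‖ + σ * (inner ℝ u (x₀ - x) : ℝ) := by
    have h : q - x = (q - x₀) + (x₀ - x) := by abel
    rw [h, smul_add, inner_add_right, hinner, real_inner_smul_right]
  have he : |(inner ℝ u (x₀ - x) : ℝ)| ≤ ‖x - x₀‖ := by
    calc |(inner ℝ u (x₀ - x) : ℝ)| ≤ ‖u‖ * ‖x₀ - x‖ := abs_real_inner_le_norm _ _
    _ = ‖x - x₀‖ := by rw [hu, one_mul, norm_sub_rev]
  have heη : |σ * (inner ℝ u (x₀ - x) : ℝ)| < η := by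
    rcases hσ with h | h <;> rw [h] <;>
      simp only [one_mul, neg_one_mul, abs_neg] <;> linarith
  obtain ⟨he1, he2⟩ := abs_lt.mp heη
  refine ⟨?_, ?_, ?_⟩
  · intro h; rw [h] at hdpos; simp at hdpos
  · rw [le_div_iff₀ hdpos, hsplit]; nlinarith
  · rw [div_le_iff₀ hdpos, hsplit]; nlinarith
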